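/- arXiv:1705.07576 — 2 statements merged into one kernel-verified Lean document; each statement's English description precedes it below -/
import Mathlib

section
/- Define θ̌_0 = π and θ̌_{i+1} = g(θ̌_i) where g(θ) = arccos(((π − θ)cos θ + sin θ)/π). Then for all i ≥ 0, θ̌_i ≥ π/(i + 1). -/
open Real

noncomputable def g (θ : ℝ) : ℝ :=
  Real.arccos (((π - θ) * Real.cos θ + Real.sin θ) / π)

/-- `sin x ≥ x - x³/6` for `x ≥ 0`. -/
lemma my_sin_lb {x : ℝ} (hx : 0 ≤ x) : x - x ^ 3 / 6 ≤ Real.sin x := by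
  have key : MonotoneOn (fun y : ℝ => Real.sin y - (y - y ^ 3 / 6)) (Set.Ici 0) := by
    apply monotoneOn_of_deriv_nonneg (convex_Ici 0)
    · fun_prop
    · intro y hy
      apply DifferentiableAt.differentiableWithinAt
      fun_prop
    · intro y hy
      have : deriv (fun y : ℝ => Real.sin y - (y - y ^ 3 / 6)) y
          = Real.cos y - (1 - y ^ 2 / 2) := by
        rw [deriv_fun_sub (by fun_prop) (by fun_prop), Real.deriv_sin,
          deriv_fun_sub (by fun_prop) (by fun_prop), deriv_id'']
        simp [deriv_div_const]
        ring
      rw [this]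
      have := Real.one_sub_sq_div_two_le_cos (x := y)
      linarith
  have h0 : (0:ℝ) ∈ Set.Ici (0:ℝ) := Set.mem_Ici.mpr (le_refl 0)
  have := key h0 (Set.mem_Ici.mpr hx) hx
  simpa using this

/-- `cos x ≤ 1 - x²/2 + x⁴/24` for `x ≥ 0`. -/
lemma my_cos_ub {x : ℝ} (hx : 0 ≤ x) : Real.cos x ≤ 1 - x ^ 2 / 2 + x ^ 4 / 24 := by
  have key : MonotoneOn (fun y : ℝ => (1 - y ^ 2 / 2 + y ^ 4 / 24) - Real.cos y)
      (Set.Ici 0) := by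
    apply monotoneOn_of_deriv_nonneg (convex_Ici 0)
    · fun_prop
    · intro y hy
      apply DifferentiableAt.differentiableWithinAt
      fun_prop
    · intro y hy
      have hy0 : 0 ≤ y := le_of_lt (by simpa using hy)
      have : deriv (fun y : ℝ => (1 - y ^ 2 / 2 + y ^ 4 / 24) - Real.cos y) y
          = (-y + y ^ 3 / 6) + Real.sin y := by
        rw [deriv_fun_sub (by fun_prop) (by fun_prop), Real.deriv_cos]
        rw [deriv_fun_add (by fun_prop) (by fun_prop), deriv_fun_sub (by fun_prop) (by fun_prop)]
        simp [deriv_div_const]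
        ring
      rw [this]
      have := my_sin_lb hy0
      linarith
  have h0 : (0:ℝ) ∈ Set.Ici (0:ℝ) := Set.mem_Ici.mpr (le_refl 0)
  have := key h0 (Set.mem_Ici.mpr hx) hx
  simp at this
  linarith [this]

/-- `sin x ≤ x - x³/6 + x⁵/120` for `x ≥ 0`. -/
lemma my_sin_ub {x : ℝ} (hx : 0 ≤ x) : Real.sin x ≤ x - x ^ 3 / 6 + x ^ 5 / 120 := by
  have key : MonotoneOn (fun y : ℝ => (y - y ^ 3 / 6 + y ^ 5 / 120) - Real.sin y)
      (Set.Ici 0) := by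
    apply monotoneOn_of_deriv_nonneg (convex_Ici 0)
    · fun_prop
    · intro y hy
      apply DifferentiableAt.differentiableWithinAt
      fun_prop
    · intro y hy
      have hy0 : 0 ≤ y := le_of_lt (by simpa using hy)
      have : deriv (fun y : ℝ => (y - y ^ 3 / 6 + y ^ 5 / 120) - Real.sin y) y
          = (1 - y ^ 2 / 2 + y ^ 4 / 24) - Real.cos y := by
        rw [deriv_fun_sub (by fun_prop) (by fun_prop), Real.deriv_sin]
        rw [deriv_fun_add (by fun_prop) (by fun_prop), deriv_fun_sub (by fun_prop) (by fun_prop)]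
        simp [deriv_div_const]
        ring
      rw [this]
      have := my_cos_ub hy0
      linarith
  have h0 : (0:ℝ) ∈ Set.Ici (0:ℝ) := Set.mem_Ici.mpr (le_refl 0)
  have := key h0 (Set.mem_Ici.mpr hx) hx
  simp at this
  linarith [this]

set_option maxHeartbeats 1000000 in
/-- Key inequality: for `0 ≤ θ ≤ π/2`,
`(π - θ) cos θ + sin θ ≤ π cos (π θ / (π + θ))`. -/
lemma key_ineq {θ : ℝ} (h0 : 0 ≤ θ) (h1 : θ ≤ π / 2) :
    (π - θ) * Real.cos θ + Real.sin θ ≤ π * Real.cos (π * θ / (π + θ)) := by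
  have hπ := Real.pi_pos
  have hπθ : 0 < π + θ := by linarith
  set ψ := π * θ / (π + θ) with hψ
  have hψ0 : 0 ≤ ψ := by positivity
  have hcosψ : 1 - ψ ^ 2 / 2 ≤ Real.cos ψ := Real.one_sub_sq_div_two_le_cos
  have hcos : Real.cos θ ≤ 1 - θ ^ 2 / 2 + θ ^ 4 / 24 := my_cos_ub h0
  have hsin : Real.sin θ ≤ θ - θ ^ 3 / 6 + θ ^ 5 / 120 := my_sin_ub h0
  have hπθ' : π - θ ≥ 0 := by linarith
  have step1 : (π - θ) * Real.cos θ + Real.sin θ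
      ≤ (π - θ) * (1 - θ ^ 2 / 2 + θ ^ 4 / 24) + (θ - θ ^ 3 / 6 + θ ^ 5 / 120) := by
    have := mul_le_mul_of_nonneg_left hcos hπθ'
    linarith
  have step2 : (π - θ) * (1 - θ ^ 2 / 2 + θ ^ 4 / 24) + (θ - θ ^ 3 / 6 + θ ^ 5 / 120)
      ≤ π * (1 - ψ ^ 2 / 2) := by
    rw [hψ]
    rw [div_pow, ← sub_nonneg]
    have expand : π * (1 - (π * θ) ^ 2 / (π + θ) ^ 2 / 2)
        - ((π - θ) * (1 - θ ^ 2 / 2 + θ ^ 4 / 24) + (θ - θ ^ 3 / 6 + θ ^ 5 / 120))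
        = θ ^ 3 * (60 * π * (2 * π + θ) - (40 + 5 * π * θ - 4 * θ ^ 2) * (π + θ) ^ 2)
            / (120 * (π + θ) ^ 2) := by
      field_simp
      ring
    rw [expand]
    apply div_nonneg _ (by positivity)
    apply mul_nonneg (by positivity)
    have hp1 : π > 3.14159 := by linarith [Real.pi_gt_d6]
    have hp2 : π < 3.1416 := by linarith [Real.pi_lt_d6]
    have ht : θ ≤ 1.5708 := by linarith
    have hπ2 : π ^ 2 < 9.8697 := by nlinarith
    have hπ2' : π ^ 2 > 9.8695 := by nlinarith
    have hπ3 : π ^ 3 < 31.007 := by nlinarith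
    have ht2 : θ ^ 2 ≤ 2.4675 := by nlinarith
    have e1 : π ^ 3 * θ ≤ 31.007 * 1.5708 :=
      mul_le_mul hπ3.le ht h0 (by norm_num)
    have e2 : π * θ ≤ 3.1416 * 1.5708 :=
      mul_le_mul hp2.le ht h0 (by norm_num)
    have e3 : π ^ 2 * θ ^ 2 ≤ 9.8697 * 2.4675 :=
      mul_le_mul hπ2.le ht2 (sq_nonneg θ) (by norm_num)
    have e4 : 0 ≤ π * θ ^ 3 := by positivity
    have e5 : 0 ≤ θ ^ 4 := by positivity
    nlinarith [e1, e2, e3, e4, e5, hπ2']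
  calc (π - θ) * Real.cos θ + Real.sin θ
      ≤ π * (1 - ψ ^ 2 / 2) := le_trans step1 step2
    _ ≤ π * Real.cos ψ := by nlinarith

/-- `g θ ≥ π θ / (π + θ)` for `0 ≤ θ ≤ π/2`. -/
lemma g_lb {θ : ℝ} (h0 : 0 ≤ θ) (h1 : θ ≤ π / 2) : π * θ / (π + θ) ≤ g θ := by
  have hπ := Real.pi_pos
  have hπθ : 0 < π + θ := by linarith
  set h := ((π - θ) * Real.cos θ + Real.sin θ) / π with hh
  set ψ := π * θ / (π + θ) with hψ
  have hψ0 : 0 ≤ ψ := by positivity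
  have hψπ : ψ ≤ π := by
    rw [hψ, div_le_iff₀ hπθ]
    nlinarith
  have hkey : h ≤ Real.cos ψ := by
    rw [hh, div_le_iff₀ hπ]
    have := key_ineq h0 h1
    linarith [this]
  -- h ∈ [-1, 1]
  have hcos0 : 0 ≤ Real.cos θ := Real.cos_nonneg_of_mem_Icc ⟨by linarith, h1⟩
  have hsin0 : 0 ≤ Real.sin θ := Real.sin_nonneg_of_nonneg_of_le_pi h0 (by linarith)
  have hhge : 0 ≤ h := by
    rw [hh]
    apply div_nonneg _ hπ.le
    exact add_nonneg (mul_nonneg (by linarith) hcos0) hsin0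
  have hhle : h ≤ 1 := by
    rw [hh, div_le_one hπ]
    have h2 : Real.cos θ ≤ 1 := Real.cos_le_one θ
    have h3 : Real.sin θ ≤ θ := Real.sin_le h0
    nlinarith
  -- arccos h ≥ ψ
  by_contra hcon
  push_neg at hcon
  have harc0 : 0 ≤ Real.arccos h := Real.arccos_nonneg h
  have : Real.cos ψ < Real.cos (Real.arccos h) :=
    Real.cos_lt_cos_of_nonneg_of_le_pi harc0 hψπ hcon
  rw [Real.cos_arccos (by linarith) hhle] at this
  exact absurd hkey (not_le.mpr this)

/-- `g θ ≤ π/2` when `0 ≤ θ ≤ π/2`. -/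
lemma g_ub {θ : ℝ} (h0 : 0 ≤ θ) (h1 : θ ≤ π / 2) : g θ ≤ π / 2 := by
  have hπ := Real.pi_pos
  have hcos0 : 0 ≤ Real.cos θ := Real.cos_nonneg_of_mem_Icc ⟨by linarith, h1⟩
  have hsin0 : 0 ≤ Real.sin θ := Real.sin_nonneg_of_nonneg_of_le_pi h0 (by linarith)
  have hπθ' : 0 ≤ π - θ := by linarith
  have : (0:ℝ) ≤ ((π - θ) * Real.cos θ + Real.sin θ) / π := by positivity
  exact Real.arccos_le_pi_div_two.mpr this

/-- For `i ≥ 1`, `π/(i+1) ≤ g^[i] π` and `g^[i] π ≤ π/2`. -/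
lemma main_claim (i : ℕ) :
    π / ((i : ℝ) + 2) ≤ g^[i + 1] π ∧ g^[i + 1] π ≤ π / 2 := by
  have hπ := Real.pi_pos
  induction i with
  | zero =>
      have h1 : g π = π / 2 := by
        unfold g
        simp [Real.arccos_zero]
      simp [h1]
  | succ n ih =>
      obtain ⟨ihl, ihr⟩ := ih
      have hn2 : (0:ℝ) < (n : ℝ) + 2 := by positivity
      have hθ0 : 0 ≤ g^[n + 1] π := le_trans (by positivity) ihl
      have hiter : g^[n + 1 + 1] π = g (g^[n + 1] π) :=
        Function.iterate_succ_apply' g (n + 1) π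
      set θ := g^[n + 1] π with hθ
      have hub : g θ ≤ π / 2 := g_ub hθ0 ihr
      have hlb : π * θ / (π + θ) ≤ g θ := g_lb hθ0 ihr
      constructor
      · rw [hiter]
        refine le_trans ?_ hlb
        -- π/(n+3) ≤ π θ/(π+θ) given θ ≥ π/(n+2)
        have hπθ : 0 < π + θ := by linarith
        rw [div_le_div_iff₀ (by push_cast; linarith) hπθ]
        have h1 : π / ((n:ℝ) + 2) ≤ θ := ihl
        have h2 : π ≤ ((n:ℝ) + 2) * θ := by
          rw [div_le_iff₀ hn2] at h1
          linarith
        push_cast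
        nlinarith
      · rw [hiter]; exact hub

theorem thetaCheck_lower_bound (i : ℕ) :
    π / ((i : ℝ) + 1) ≤ g^[i] π := by
  have hπ := Real.pi_pos
  match i with
  | 0 => simp
  | n + 1 =>
      have := (main_claim n).1
      push_cast
      push_cast at this
      convert this using 2
      ring
end

section
/- Fix 0 < ε < 0.1 and suppose W ∈ ℝ^{n×k} satisfies the Weight Distribution Condition with constant ε. Then for all nonzero x, y ∈ ℝ^k, |∠(W_{+,x}x, W_{+,y}y) − g(∠(x,y))| ≤ 4√ε, where g(θ) = arccos(((π − θ)cos θ + sin θ)/π). -/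
set_option maxHeartbeats 1000000


open Real Matrix

/-- Spectral norm of a matrix, as the operator norm between Euclidean spaces. -/
noncomputable def spec {n k : ℕ} (M : Matrix (Fin n) (Fin k) ℝ) : ℝ :=
  ‖LinearMap.toContinuousLinearMap (Matrix.toEuclideanLin M)‖

noncomputable def n2 {k : ℕ} (x : Fin k → ℝ) : ℝ := Real.sqrt (x ⬝ᵥ x)

/-- Angle between two vectors of `ℝ^k`. -/
noncomputable def ang {k : ℕ} (u v : Fin k → ℝ) : ℝ :=
  Real.arccos ((u ⬝ᵥ v) / (n2 u * n2 v))

/-- `W_{+,x} = diag(Wx > 0) W`: keep the rows of `W` that have positive inner product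
with `x`, zeroing out the others. -/
noncomputable def Wplus {n k : ℕ} (W : Matrix (Fin n) (Fin k) ℝ) (x : Fin k → ℝ) :
    Matrix (Fin n) (Fin k) ℝ :=
  Matrix.of fun i j => if 0 < W.mulVec x i then W i j else 0

/-- The Weight Distribution Condition with constant `ε`. -/
def WDC {n k : ℕ} (W : Matrix (Fin n) (Fin k) ℝ) (ε : ℝ) : Prop :=
  ∀ x y : Fin k → ℝ, x ≠ 0 → y ≠ 0 →
    ∃ M : Matrix (Fin k) (Fin k) ℝ,
      Mᵀ = M ∧
      M.mulVec ((n2 x)⁻¹ • x) = (n2 y)⁻¹ • y ∧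
      M.mulVec ((n2 y)⁻¹ • y) = (n2 x)⁻¹ • x ∧
      (∀ z : Fin k → ℝ, z ⬝ᵥ x = 0 → z ⬝ᵥ y = 0 → M.mulVec z = 0) ∧
      spec ((Wplus W x)ᵀ * (Wplus W y)
          - ((π - ang x y) / (2 * π)) • (1 : Matrix (Fin k) (Fin k) ℝ)
          - (Real.sin (ang x y) / (2 * π)) • M) ≤ ε

/-! ### Auxiliary lemmas -/

section Bridge

lemma n2_eq_norm {k : ℕ} (x : Fin k → ℝ) :
    n2 x = ‖(WithLp.equiv 2 (Fin k → ℝ)).symm x‖ := by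
  rw [EuclideanSpace.norm_eq]
  simp [n2, dotProduct, Real.norm_eq_abs, sq_abs, sq]

lemma dot_eq_inner {k : ℕ} (x y : Fin k → ℝ) :
    x ⬝ᵥ y = inner ℝ ((WithLp.equiv 2 (Fin k → ℝ)).symm x) ((WithLp.equiv 2 (Fin k → ℝ)).symm y) := by
  rw [WithLp.equiv_symm_apply, EuclideanSpace.inner_toLp_toLp, star_trivial, dotProduct_comm]

lemma n2_nonneg {k : ℕ} (x : Fin k → ℝ) : 0 ≤ n2 x := Real.sqrt_nonneg _

lemma n2_pos {k : ℕ} {x : Fin k → ℝ} (hx : x ≠ 0) : 0 < n2 x := by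
  rw [n2_eq_norm, norm_pos_iff]
  simp only [ne_eq, WithLp.equiv_symm_apply, WithLp.toLp_eq_zero]
  exact hx

lemma n2_sq {k : ℕ} (x : Fin k → ℝ) : n2 x * n2 x = x ⬝ᵥ x := by
  have : (0:ℝ) ≤ x ⬝ᵥ x := by rw [dot_eq_inner]; exact real_inner_self_nonneg
  rw [n2]; exact Real.mul_self_sqrt this

lemma cauchy {k : ℕ} (x y : Fin k → ℝ) : |x ⬝ᵥ y| ≤ n2 x * n2 y := by
  rw [dot_eq_inner, n2_eq_norm, n2_eq_norm]
  exact abs_real_inner_le_norm _ _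

lemma spec_bound {n k : ℕ} (M : Matrix (Fin n) (Fin k) ℝ) (z : Fin k → ℝ) :
    n2 (M.mulVec z) ≤ spec M * n2 z := by
  have h := (LinearMap.toContinuousLinearMap (Matrix.toEuclideanLin M)).le_opNorm
      ((WithLp.equiv 2 (Fin k → ℝ)).symm z)
  rw [LinearMap.coe_toContinuousLinearMap'] at h
  rw [WithLp.equiv_symm_apply, Matrix.toEuclideanLin_apply_piLp_toLp] at h
  rw [n2_eq_norm, n2_eq_norm, WithLp.equiv_symm_apply]
  exact h

lemma spec_dot_bound {k : ℕ} (M : Matrix (Fin k) (Fin k) ℝ) (w z : Fin k → ℝ) :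
    |w ⬝ᵥ M.mulVec z| ≤ spec M * n2 w * n2 z := by
  calc |w ⬝ᵥ M.mulVec z| ≤ n2 w * n2 (M.mulVec z) := cauchy _ _
    _ ≤ n2 w * (spec M * n2 z) := by
        have := spec_bound M z
        nlinarith [n2_nonneg (M.mulVec z), n2_nonneg w]
    _ = spec M * n2 w * n2 z := by ring

end Bridge

section Trig

lemma one_sub_cos_le {α β : ℝ} (hβ0 : 0 ≤ β) (hβα : β ≤ α) (hαπ : α ≤ π) :
    1 - Real.cos (α - β) ≤ Real.cos β - Real.cos α := by
  have hd : Real.cos β - Real.cos α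
      = 2 * Real.sin ((α + β)/2) * Real.sin ((α - β)/2) := by
    rw [Real.cos_sub_cos]
    have : Real.sin ((β - α)/2) = - Real.sin ((α - β)/2) := by
      rw [show (β - α)/2 = -((α - β)/2) by ring, Real.sin_neg]
    rw [this]; ring
  have hsq : 1 - Real.cos (α - β) = 2 * Real.sin ((α - β)/2) ^ 2 := by
    have := Real.sin_sq_eq_half_sub ((α - β)/2)
    rw [show 2 * ((α - β)/2) = α - β by ring] at this
    linarith
  have hmono : Real.sin ((α - β)/2) ≤ Real.sin ((α + β)/2) := by
    have h := Real.sin_sub_sin ((α + β)/2) ((α - β)/2)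
    have h1 : 0 ≤ Real.sin (β/2) :=
      Real.sin_nonneg_of_nonneg_of_le_pi (by linarith) (by linarith)
    have h2 : 0 ≤ Real.cos (α/2) :=
      Real.cos_nonneg_of_mem_Icc ⟨by linarith [Real.pi_pos], by linarith⟩
    have : ((α+β)/2 + (α-β)/2)/2 = α/2 := by ring
    have h' : Real.sin ((α+β)/2) - Real.sin ((α-β)/2)
        = 2 * Real.sin (β/2) * Real.cos (α/2) := by
      rw [h, show ((α+β)/2 - (α-β)/2)/2 = β/2 by ring, this]
    nlinarith
  have hs0 : 0 ≤ Real.sin ((α - β)/2) :=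
    Real.sin_nonneg_of_nonneg_of_le_pi (by linarith) (by linarith [Real.pi_pos])
  nlinarith

lemma angle_close_aux {α β ε : ℝ} (hβ0 : 0 ≤ β) (hβα : β ≤ α) (hαπ : α ≤ π)
    (hε0 : 0 < ε) (hε : ε < 0.1) (h : Real.cos β - Real.cos α ≤ 4 * ε) :
    α - β ≤ 4 * Real.sqrt ε := by
  have key := one_sub_cos_le hβ0 hβα hαπ
  have hsq : Real.sin ((α - β)/2) ^ 2 ≤ 2 * ε := by
    have := Real.sin_sq_eq_half_sub ((α - β)/2)
    rw [show 2 * ((α - β)/2) = α - β by ring] at this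
    linarith
  set t := (α - β)/2 with ht
  have ht0 : 0 ≤ t := by simp only [ht]; linarith
  have htpi : t ≤ π / 2 := by simp only [ht]; linarith
  have hs0 : 0 ≤ Real.sin t :=
    Real.sin_nonneg_of_nonneg_of_le_pi ht0 (by linarith [Real.pi_pos])
  rcases eq_or_lt_of_le ht0 with h0 | h0
  · have hz : α - β = 0 := by simp only [ht] at h0; linarith
    rw [hz]; positivity
  rcases le_or_gt t 1 with h1 | h1
  · have hc := Real.sin_gt_sub_cube h0
    have ht3 : t ^ 3 ≤ t := by
      nlinarith [mul_nonneg h0.le (sub_nonneg.2 h1),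
        mul_nonneg (mul_nonneg h0.le h0.le) (sub_nonneg.2 h1)]
    have hlow : 3 / 4 * t ≤ Real.sin t := by nlinarith
    have htsq : t ^ 2 ≤ 32 / 9 * ε := by nlinarith
    have hfin : (α - β) ^ 2 ≤ 16 * ε := by
      have h2t : α - β = 2 * t := by rw [ht]; ring
      rw [h2t]; nlinarith
    calc α - β = Real.sqrt ((α - β) ^ 2) := by
          rw [Real.sqrt_sq (by linarith)]
      _ ≤ Real.sqrt (16 * ε) := Real.sqrt_le_sqrt hfin
      _ = 4 * Real.sqrt ε := by
          rw [Real.sqrt_mul (by norm_num), show (16:ℝ) = 4 ^ 2 by norm_num,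
            Real.sqrt_sq (by norm_num)]
  · exfalso
    have hmono : Real.sin 1 ≤ Real.sin t :=
      Real.sin_le_sin_of_le_of_le_pi_div_two (by linarith [Real.pi_pos]) htpi h1.le
    have h34 : (3:ℝ)/4 < Real.sin 1 := by
      have := Real.sin_gt_sub_cube (by norm_num : (0:ℝ) < 1)
      norm_num at this; linarith
    nlinarith

lemma angle_close {α β ε : ℝ} (hα : 0 ≤ α) (hαπ : α ≤ π) (hβ0 : 0 ≤ β) (hβπ : β ≤ π)
    (hε0 : 0 < ε) (hε : ε < 0.1) (h : |Real.cos α - Real.cos β| ≤ 4 * ε) :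
    |α - β| ≤ 4 * Real.sqrt ε := by
  rcases le_total β α with hle | hle
  · rw [abs_of_nonneg (by linarith)]
    exact angle_close_aux hβ0 hle hαπ hε0 hε (by rw [abs_le] at h; linarith)
  · rw [abs_of_nonpos (by linarith)]
    have := angle_close_aux hα hle hβπ hε0 hε (by rw [abs_le] at h; linarith)
    linarith

lemma c0_nonneg {θ : ℝ} (h0 : 0 ≤ θ) (hπ : θ ≤ π) :
    0 ≤ ((π - θ) * Real.cos θ + Real.sin θ) / π := by
  have hπpos := Real.pi_pos
  apply div_nonneg _ hπpos.le
  rcases le_or_gt θ (π/2) with hc | hc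
  · have h1 : 0 ≤ Real.cos θ := Real.cos_nonneg_of_mem_Icc ⟨by linarith, hc⟩
    have h2 : 0 ≤ Real.sin θ := Real.sin_nonneg_of_nonneg_of_le_pi h0 hπ
    nlinarith
  · set s := π - θ with hs
    have hs0 : 0 ≤ s := by simp only [hs]; linarith
    have hs2 : s < π/2 := by simp only [hs]; linarith
    have hsin : Real.sin θ = Real.sin s := by
      rw [hs, Real.sin_pi_sub]
    have hcos : Real.cos θ = - Real.cos s := by
      have h1 : Real.cos s = - Real.cos θ := by rw [hs]; exact Real.cos_pi_sub θ
      linarith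
    rw [hsin, hcos]
    have hkey : s * Real.cos s ≤ Real.sin s := by
      rcases eq_or_lt_of_le hs0 with h | h
      · rw [← h]; simp
      · have hcospos : 0 < Real.cos s := Real.cos_pos_of_mem_Ioo ⟨by linarith, hs2⟩
        have htan := Real.lt_tan h hs2
        rw [Real.tan_eq_sin_div_cos, lt_div_iff₀ hcospos] at htan
        linarith
    nlinarith

lemma c0_le_one {θ : ℝ} (h0 : 0 ≤ θ) (hπ : θ ≤ π) :
    ((π - θ) * Real.cos θ + Real.sin θ) / π ≤ 1 := by
  have hπpos := Real.pi_pos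
  rw [div_le_one hπpos]
  have h1 := Real.sin_le h0
  have h2 := Real.cos_le_one θ
  have h3 := Real.neg_one_le_cos θ
  nlinarith

end Trig

lemma wdc_pair {n k : ℕ} {W : Matrix (Fin n) (Fin k) ℝ} {ε : ℝ} (hW : WDC W ε)
    {x y : Fin k → ℝ} (hx : x ≠ 0) (hy : y ≠ 0) :
    |((Wplus W x).mulVec x) ⬝ᵥ ((Wplus W y).mulVec y)
      - ((π - ang x y) / (2 * π) * (x ⬝ᵥ y)
         + Real.sin (ang x y) / (2 * π) * (n2 x * n2 y))| ≤ ε * (n2 x * n2 y) := by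
  obtain ⟨M, hMT, hMx, hMy, -, hspec⟩ := hW x y hx hy
  set a := (π - ang x y) / (2 * π) with ha
  set b := Real.sin (ang x y) / (2 * π) with hb
  set E := (Wplus W x)ᵀ * (Wplus W y) - a • (1 : Matrix (Fin k) (Fin k) ℝ) - b • M with hE
  have hNx := n2_pos hx
  have hNy := n2_pos hy
  have hMy' : M.mulVec y = (n2 y * (n2 x)⁻¹) • x := by
    have hyy : y = n2 y • ((n2 y)⁻¹ • y) := by
      rw [smul_smul, mul_inv_cancel₀ hNy.ne', one_smul]
    calc M.mulVec y = M.mulVec (n2 y • ((n2 y)⁻¹ • y)) := by rw [← hyy]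
      _ = n2 y • M.mulVec ((n2 y)⁻¹ • y) := Matrix.mulVec_smul _ _ _
      _ = n2 y • ((n2 x)⁻¹ • x) := by rw [hMy]
      _ = (n2 y * (n2 x)⁻¹) • x := smul_smul _ _ _
  have hxMy : x ⬝ᵥ M.mulVec y = n2 x * n2 y := by
    rw [hMy', dotProduct_smul, smul_eq_mul, ← n2_sq]
    field_simp
  have hA : x ⬝ᵥ ((Wplus W x)ᵀ * (Wplus W y)).mulVec y
      = ((Wplus W x).mulVec x) ⬝ᵥ ((Wplus W y).mulVec y) := by
    rw [← Matrix.mulVec_mulVec, Matrix.dotProduct_mulVec, Matrix.vecMul_transpose]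
  have hEdot : x ⬝ᵥ E.mulVec y
      = ((Wplus W x).mulVec x) ⬝ᵥ ((Wplus W y).mulVec y)
        - (a * (x ⬝ᵥ y) + b * (n2 x * n2 y)) := by
    rw [hE, Matrix.sub_mulVec, Matrix.sub_mulVec, dotProduct_sub, dotProduct_sub,
      Matrix.smul_mulVec, Matrix.smul_mulVec, Matrix.one_mulVec,
      dotProduct_smul, dotProduct_smul, hA, hxMy, smul_eq_mul, smul_eq_mul]
    ring
  have hsb := spec_dot_bound E x y
  rw [hEdot] at hsb
  have hmul : spec E * n2 x * n2 y ≤ ε * (n2 x * n2 y) := by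
    have h1 : spec E * (n2 x * n2 y) ≤ ε * (n2 x * n2 y) :=
      mul_le_mul_of_nonneg_right hspec (by positivity)
    nlinarith
  linarith


lemma sqrt_prod_le {a b c A B : ℝ} (ha : 0 ≤ a) (hb : 0 ≤ b) (hA : 0 ≤ A) (hB : 0 ≤ B)
    (hc : 0 ≤ c) (h1 : a * a ≤ c * (A * A)) (h2 : b * b ≤ c * (B * B)) :
    a * b ≤ c * (A * B) := by
  have ha' : a ≤ Real.sqrt c * A := by
    rw [← Real.sqrt_mul_self ha]
    calc Real.sqrt (a * a) ≤ Real.sqrt (c * (A * A)) := Real.sqrt_le_sqrt h1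
      _ = Real.sqrt c * A := by
          rw [Real.sqrt_mul hc, Real.sqrt_mul_self hA]
  have hb' : b ≤ Real.sqrt c * B := by
    rw [← Real.sqrt_mul_self hb]
    calc Real.sqrt (b * b) ≤ Real.sqrt (c * (B * B)) := Real.sqrt_le_sqrt h2
      _ = Real.sqrt c * B := by
          rw [Real.sqrt_mul hc, Real.sqrt_mul_self hB]
  calc a * b ≤ (Real.sqrt c * A) * (Real.sqrt c * B) :=
        mul_le_mul ha' hb' hb (by positivity)
    _ = (Real.sqrt c * Real.sqrt c) * (A * B) := by ring
    _ = c * (A * B) := by rw [Real.mul_self_sqrt hc]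

lemma le_sqrt_prod {a b c A B : ℝ} (ha : 0 ≤ a) (hb : 0 ≤ b) (hA : 0 ≤ A) (hB : 0 ≤ B)
    (hc : 0 ≤ c) (h1 : c * (A * A) ≤ a * a) (h2 : c * (B * B) ≤ b * b) :
    c * (A * B) ≤ a * b := by
  have ha' : Real.sqrt c * A ≤ a := by
    calc Real.sqrt c * A = Real.sqrt (c * (A * A)) := by
          rw [Real.sqrt_mul hc, Real.sqrt_mul_self hA]
      _ ≤ Real.sqrt (a * a) := Real.sqrt_le_sqrt h1
      _ = a := Real.sqrt_mul_self ha
  have hb' : Real.sqrt c * B ≤ b := by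
    calc Real.sqrt c * B = Real.sqrt (c * (B * B)) := by
          rw [Real.sqrt_mul hc, Real.sqrt_mul_self hB]
      _ ≤ Real.sqrt (b * b) := Real.sqrt_le_sqrt h2
      _ = b := Real.sqrt_mul_self hb
  calc c * (A * B) = (Real.sqrt c * Real.sqrt c) * (A * B) := by rw [Real.mul_self_sqrt hc]
    _ = (Real.sqrt c * A) * (Real.sqrt c * B) := by ring
    _ ≤ a * b := mul_le_mul ha' hb' (by positivity) ha

theorem wdc_angle_contraction {n k : ℕ} (W : Matrix (Fin n) (Fin k) ℝ) (ε : ℝ)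
    (hε0 : 0 < ε) (hε : ε < 0.1) (hW : WDC W ε)
    (x y : Fin k → ℝ) (hx : x ≠ 0) (hy : y ≠ 0) :
    |ang ((Wplus W x).mulVec x) ((Wplus W y).mulVec y) - g (ang x y)| ≤ 4 * Real.sqrt ε := by
  have hπ := Real.pi_pos
  have hNx : 0 < n2 x := n2_pos hx
  have hNy : 0 < n2 y := n2_pos hy
  have hθ0 : 0 ≤ ang x y := Real.arccos_nonneg _
  have hθπ : ang x y ≤ π := Real.arccos_le_pi _
  -- cos of the input angle
  have hcs : |x ⬝ᵥ y| ≤ n2 x * n2 y := cauchy x y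
  have hratio1 : -1 ≤ (x ⬝ᵥ y) / (n2 x * n2 y) := by
    rw [abs_le] at hcs
    rw [le_div_iff₀ (by positivity)]; linarith [hcs.1]
  have hratio2 : (x ⬝ᵥ y) / (n2 x * n2 y) ≤ 1 := by
    rw [abs_le] at hcs
    rw [div_le_one (by positivity)]; exact hcs.2
  have hcosθ : Real.cos (ang x y) = (x ⬝ᵥ y) / (n2 x * n2 y) :=
    Real.cos_arccos hratio1 hratio2
  have hxy : x ⬝ᵥ y = Real.cos (ang x y) * (n2 x * n2 y) := by
    rw [hcosθ]; field_simp
  -- self angles are zero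
  have hangxx : ang x x = 0 := by
    rw [ang, n2_sq x, div_self (by rw [← n2_sq x]; positivity), Real.arccos_one]
  have hangyy : ang y y = 0 := by
    rw [ang, n2_sq y, div_self (by rw [← n2_sq y]; positivity), Real.arccos_one]
  -- abbreviations, made opaque
  obtain ⟨u, hu⟩ : ∃ u', u' = (Wplus W x).mulVec x := ⟨_, rfl⟩
  obtain ⟨v, hv⟩ : ∃ v', v' = (Wplus W y).mulVec y := ⟨_, rfl⟩
  rw [← hu, ← hv]
  -- norm estimates for u and v
  have hu2 : |u ⬝ᵥ u - 1/2 * (n2 x * n2 x)| ≤ ε * (n2 x * n2 x) := by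
    have h := wdc_pair hW hx hx
    rw [← hu] at h
    have e : (π - ang x x) / (2 * π) * (x ⬝ᵥ x)
        + Real.sin (ang x x) / (2 * π) * (n2 x * n2 x) = 1/2 * (n2 x * n2 x) := by
      rw [hangxx, Real.sin_zero, ← n2_sq x]
      field_simp
      ring
    rw [e] at h
    exact h
  have hv2 : |v ⬝ᵥ v - 1/2 * (n2 y * n2 y)| ≤ ε * (n2 y * n2 y) := by
    have h := wdc_pair hW hy hy
    rw [← hv] at h
    have e : (π - ang y y) / (2 * π) * (y ⬝ᵥ y)
        + Real.sin (ang y y) / (2 * π) * (n2 y * n2 y) = 1/2 * (n2 y * n2 y) := by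
      rw [hangyy, Real.sin_zero, ← n2_sq y]
      field_simp
      ring
    rw [e] at h
    exact h
  obtain ⟨c0, hc0⟩ : ∃ c, c = ((π - ang x y) * Real.cos (ang x y) + Real.sin (ang x y)) / π :=
    ⟨_, rfl⟩
  have hc00 : 0 ≤ c0 := hc0 ▸ c0_nonneg hθ0 hθπ
  have hc01 : c0 ≤ 1 := hc0 ▸ c0_le_one hθ0 hθπ
  have hxy2 : |u ⬝ᵥ v - c0/2 * (n2 x * n2 y)| ≤ ε * (n2 x * n2 y) := by
    have h := wdc_pair hW hx hy
    rw [← hu, ← hv] at h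
    have e : (π - ang x y) / (2 * π) * (x ⬝ᵥ y)
        + Real.sin (ang x y) / (2 * π) * (n2 x * n2 y) = c0/2 * (n2 x * n2 y) := by
      rw [hxy, hc0]
      field_simp
    rw [e] at h
    exact h
  -- bounds on norms of u, v
  have huu := n2_sq u
  have hvv := n2_sq v
  have hu2' := abs_le.1 hu2
  have hv2' := abs_le.1 hv2
  have hau_up : n2 u * n2 u ≤ (1/2 + ε) * (n2 x * n2 x) := by
    rw [huu]; nlinarith [hu2'.2, mul_pos hNx hNx]
  have hau_lo : (1/2 - ε) * (n2 x * n2 x) ≤ n2 u * n2 u := by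
    rw [huu]; nlinarith [hu2'.1, mul_pos hNx hNx]
  have hbv_up : n2 v * n2 v ≤ (1/2 + ε) * (n2 y * n2 y) := by
    rw [hvv]; nlinarith [hv2'.2, mul_pos hNy hNy]
  have hbv_lo : (1/2 - ε) * (n2 y * n2 y) ≤ n2 v * n2 v := by
    rw [hvv]; nlinarith [hv2'.1, mul_pos hNy hNy]
  have hNu : 0 < n2 u := by
    rcases (n2_nonneg u).eq_or_lt with h | h
    · exfalso; nlinarith [hau_lo, mul_pos hNx hNx]
    · exact h
  have hNv : 0 < n2 v := by
    rcases (n2_nonneg v).eq_or_lt with h | h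
    · exfalso; nlinarith [hbv_lo, mul_pos hNy hNy]
    · exact h
  have hup : n2 u * n2 v ≤ (1/2 + ε) * (n2 x * n2 y) :=
    sqrt_prod_le hNu.le hNv.le hNx.le hNy.le (by linarith) hau_up hbv_up
  have hlo : (1/2 - ε) * (n2 x * n2 y) ≤ n2 u * n2 v :=
    le_sqrt_prod hNu.le hNv.le hNx.le hNy.le (by linarith) hau_lo hbv_lo
  -- cosine of the output angle
  obtain ⟨C, hC⟩ : ∃ c, c = (u ⬝ᵥ v) / (n2 u * n2 v) := ⟨_, rfl⟩
  have hcsuv : |u ⬝ᵥ v| ≤ n2 u * n2 v := cauchy u v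
  have hCl : -1 ≤ C := by
    rw [abs_le] at hcsuv
    rw [hC, le_div_iff₀ (mul_pos hNu hNv)]; linarith [hcsuv.1]
  have hCr : C ≤ 1 := by
    rw [abs_le] at hcsuv
    rw [hC, div_le_one (mul_pos hNu hNv)]; exact hcsuv.2
  have hcosang : Real.cos (ang u v) = C := by
    rw [ang, ← hC]; exact Real.cos_arccos hCl hCr
  have hcosg : Real.cos (g (ang x y)) = c0 := by
    have hgθ : g (ang x y) = Real.arccos c0 := by rw [hc0]; simp only [g]
    rw [hgθ]; exact Real.cos_arccos (by linarith) (by linarith)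
  -- |C - c0| ≤ 4 ε
  have hCab : C * (n2 u * n2 v) = u ⬝ᵥ v := by
    rw [hC]; exact div_mul_cancel₀ _ (mul_pos hNu hNv).ne'
  have habs2 : |n2 u * n2 v - 1/2 * (n2 x * n2 y)| ≤ ε * (n2 x * n2 y) := by
    rw [abs_le]
    constructor <;> nlinarith [hup, hlo]
  have habs1 : |C * (n2 u * n2 v) - c0/2 * (n2 x * n2 y)| ≤ ε * (n2 x * n2 y) := by
    rw [hCab]; exact hxy2
  have hdiff : |C - c0| ≤ 4 * ε := by
    have hXY : (0:ℝ) < n2 x * n2 y := mul_pos hNx hNy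
    have key : |C - c0| * ((n2 x * n2 y)/2) ≤ 2 * ε * (n2 x * n2 y) := by
      have e : (C - c0) * ((n2 x * n2 y)/2)
          = C * (1/2 * (n2 x * n2 y) - n2 u * n2 v)
            + (C * (n2 u * n2 v) - c0/2 * (n2 x * n2 y)) := by ring
      calc |C - c0| * ((n2 x * n2 y)/2) = |(C - c0) * ((n2 x * n2 y)/2)| := by
            rw [abs_mul, abs_of_nonneg (by positivity : (0:ℝ) ≤ (n2 x * n2 y)/2)]
        _ = |C * (1/2 * (n2 x * n2 y) - n2 u * n2 v)
              + (C * (n2 u * n2 v) - c0/2 * (n2 x * n2 y))| := by rw [e]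
        _ ≤ |C * (1/2 * (n2 x * n2 y) - n2 u * n2 v)|
              + |C * (n2 u * n2 v) - c0/2 * (n2 x * n2 y)| := abs_add_le _ _
        _ ≤ 1 * (ε * (n2 x * n2 y)) + ε * (n2 x * n2 y) := by
            refine add_le_add ?_ habs1
            rw [abs_mul]
            have hCa : |C| ≤ 1 := abs_le.2 ⟨hCl, hCr⟩
            have habs2' : |1/2 * (n2 x * n2 y) - n2 u * n2 v| ≤ ε * (n2 x * n2 y) := by
              rw [abs_sub_comm]; exact habs2
            exact mul_le_mul hCa habs2' (abs_nonneg _) zero_le_one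
        _ = 2 * ε * (n2 x * n2 y) := by ring
    have key' : |C - c0| * ((n2 x * n2 y)/2) ≤ 4 * ε * ((n2 x * n2 y)/2) := by linarith only [key]
    exact le_of_mul_le_mul_right key' (by positivity)
  -- conclude
  exact angle_close (α := ang u v) (β := g (ang x y))
    (Real.arccos_nonneg _) (Real.arccos_le_pi _)
    (Real.arccos_nonneg _) (Real.arccos_le_pi _) hε0 hε
    (by rw [hcosang, hcosg]; exact hdiff)
end
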